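/- For all i, j ∈ {1,…,K}: Σ_{k,ℓ=1}^n c(λ_k,λ_ℓ) ⟨v_k, Pφ_i v_ℓ⟩ ⟨v_ℓ, Pφ_j v_k⟩ = Tr[[[Ψ_φ†(H_j), G(θ)], Ψ_φ†(H_i)] ρ(θ)]; that is, the Kubo–Mori information matrix elements of the evolved quantum Boltzmann machine with respect to the φ parameters are I^KM_{ij}(φ) = ⟨[[Ψ_φ†(H_j),G(θ)],Ψ_φ†(H_i)]⟩_{ρ(θ)}. -/

import Mathlib

open MeasureTheory Matrix

noncomputable section

attribute [local instance] Matrix.normedAddCommGroup Matrix.normedSpace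

/-- Square complex matrices. -/
abbrev Mat (n : ℕ) := Matrix (Fin n) (Fin n) ℂ

/-- The parameterized Hamiltonian `G(θ) = ∑ j, θ j • G j`. -/
def Gm {n J : ℕ} (G : Fin J → Mat n) (θ : Fin J → ℝ) : Mat n := ∑ j, (θ j : ℂ) • G j

/-- The parameterized Hamiltonian `H(φ) = ∑ k, φ k • H k`. -/
def Hm {n K : ℕ} (H : Fin K → Mat n) (φ : Fin K → ℝ) : Mat n := ∑ k, (φ k : ℂ) • H k

/-- The partition function `Z(θ) = Tr[exp (−G(θ))]` (a positive real). -/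
def Zpf {n J : ℕ} (G : Fin J → Mat n) (θ : Fin J → ℝ) : ℝ :=
  (Matrix.trace (NormedSpace.exp (-(Gm G θ)))).re

/-- The quantum Boltzmann machine `ρ(θ) = exp(−G(θ))/Z(θ)`. -/
def qbm {n J : ℕ} (G : Fin J → Mat n) (θ : Fin J → ℝ) : Mat n :=
  ((Zpf G θ : ℂ))⁻¹ • NormedSpace.exp (-(Gm G θ))

/-- The unitary `exp(−i H(φ))`. -/
def uH {n K : ℕ} (H : Fin K → Mat n) (φ : Fin K → ℝ) : Mat n :=
  NormedSpace.exp (-(Complex.I • Hm H φ))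

/-- The unitary `exp(i H(φ))`. -/
def uH' {n K : ℕ} (H : Fin K → Mat n) (φ : Fin K → ℝ) : Mat n :=
  NormedSpace.exp (Complex.I • Hm H φ)

/-- The evolved quantum Boltzmann machine `ω(θ,φ) = exp(−iH(φ)) ρ(θ) exp(iH(φ))`. -/
def eqbm {n J K : ℕ} (G : Fin J → Mat n) (H : Fin K → Mat n)
    (θ : Fin J → ℝ) (φ : Fin K → ℝ) : Mat n :=
  uH H φ * qbm G θ * uH' H φ

/-- The high-peak-tent probability density `p(t) = (2/π) ln |coth (π t / 2)|`. -/
def hpt (t : ℝ) : ℝ :=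
  (2 / Real.pi) * Real.log |Real.cosh (Real.pi * t / 2) / Real.sinh (Real.pi * t / 2)|

/-- The channel `Φ_θ(X) = ∫ℝ p(t) exp(−iG(θ)t) X exp(iG(θ)t) dt`. -/
def chanΦ {n J : ℕ} (G : Fin J → Mat n) (θ : Fin J → ℝ) (X : Mat n) : Mat n :=
  ∫ t : ℝ, hpt t •
    (NormedSpace.exp ((-(Complex.I * (t : ℂ))) • Gm G θ) * X *
      NormedSpace.exp ((Complex.I * (t : ℂ)) • Gm G θ))

/-- The channel `Ψ_φ(X) = ∫₀¹ exp(−iH(φ)t) X exp(iH(φ)t) dt`. -/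
def chanΨ {n K : ℕ} (H : Fin K → Mat n) (φ : Fin K → ℝ) (X : Mat n) : Mat n :=
  ∫ t in (0:ℝ)..1,
    (NormedSpace.exp ((-(Complex.I * (t : ℂ))) • Hm H φ) * X *
      NormedSpace.exp ((Complex.I * (t : ℂ)) • Hm H φ))

/-- The adjoint channel `Ψ_φ†(X) = ∫₀¹ exp(iH(φ)t) X exp(−iH(φ)t) dt`. -/
def chanΨdag {n K : ℕ} (H : Fin K → Mat n) (φ : Fin K → ℝ) (X : Mat n) : Mat n :=
  ∫ t in (0:ℝ)..1,
    (NormedSpace.exp ((Complex.I * (t : ℂ)) • Hm H φ) * X *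
      NormedSpace.exp ((-(Complex.I * (t : ℂ))) • Hm H φ))

/-- `⟨x, y⟩ = ∑ m, conj (x m) * y m`. -/
def dotc {n : ℕ} (x y : Fin n → ℂ) : ℂ := ∑ m, (starRingEnd ℂ) (x m) * y m

/-- The eigenvalues `λ_k = exp(−μ_k)/(∑_m exp(−μ_m))` of `ρ(θ)`. -/
def lamd {n : ℕ} (μ : Fin n → ℝ) (k : Fin n) : ℝ := Real.exp (-μ k) / ∑ m, Real.exp (-μ m)

/-- The partial derivative of `ω(θ,φ)` with respect to `θ_j`:
`Pθ_j = −(1/2){exp(−iH(φ)) Φ_θ(G_j) exp(iH(φ)), ω(θ,φ)} + ⟨G_j⟩_{ρ(θ)} ω(θ,φ)`. -/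
def Pθ {n J K : ℕ} (G : Fin J → Mat n) (H : Fin K → Mat n)
    (θ : Fin J → ℝ) (φ : Fin K → ℝ) (j : Fin J) : Mat n :=
  -(1 / 2 : ℂ) •
      (uH H φ * chanΦ G θ (G j) * uH' H φ * eqbm G H θ φ
        + eqbm G H θ φ * (uH H φ * chanΦ G θ (G j) * uH' H φ))
    + Matrix.trace (G j * qbm G θ) • eqbm G H θ φ

/-- The partial derivative of `ω(θ,φ)` with respect to `φ_k`: `Pφ_k = i[ω(θ,φ), Ψ_φ(H_k)]`. -/
def Pφ {n J K : ℕ} (G : Fin J → Mat n) (H : Fin K → Mat n)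
    (θ : Fin J → ℝ) (φ : Fin K → ℝ) (k : Fin K) : Mat n :=
  Complex.I • (eqbm G H θ φ * chanΨ H φ (H k) - chanΨ H φ (H k) * eqbm G H θ φ)

/-- The coefficient `c(x,y) = (ln x − ln y)/(x − y)` for `x ≠ y`, and `c(x,x) = 1/x`. -/
def cKM (x y : ℝ) : ℝ := if x = y then 1 / x else (Real.log x - Real.log y) / (x - y)


section Helpers

lemma matexp_cont {n : ℕ} (B : Mat n) :
    Continuous fun t : ℝ => NormedSpace.exp ((t : ℂ) • B) := by
  open scoped Norms.Operator in
  exact NormedSpace.exp_continuous.comp ((Complex.continuous_ofReal).smul continuous_const)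

lemma matexp_cont' {n : ℕ} (c : ℂ) (B : Mat n) :
    Continuous fun t : ℝ => NormedSpace.exp ((c * (t : ℂ)) • B) := by
  have : (fun t : ℝ => NormedSpace.exp ((c * (t : ℂ)) • B))
      = fun t : ℝ => NormedSpace.exp ((t : ℂ) • (c • B)) := by
    funext t; rw [smul_smul, mul_comm]
  rw [this]; exact matexp_cont _

lemma conj_intInt {n : ℕ} (M N : Mat n) (f : ℝ → Mat n) (hf : Continuous f) :
    M * (∫ t in (0:ℝ)..1, f t) * N = ∫ t in (0:ℝ)..1, M * f t * N := by
  let L : Mat n →L[ℂ] Mat n :=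
    LinearMap.toContinuousLinearMap ((LinearMap.mulRight ℂ N).comp (LinearMap.mulLeft ℂ M))
  have h := L.intervalIntegral_comp_comm (hf.intervalIntegrable (μ := volume) 0 1)
  have hL : ∀ X, L X = M * X * N := fun X => rfl
  rw [← hL]; refine h.symm.trans ?_
  exact intervalIntegral.integral_congr (fun t _ => (hL (f t)).symm)

lemma exp_smul_add' {n : ℕ} (B : Mat n) (c d : ℂ) :
    NormedSpace.exp ((c + d) • B) = NormedSpace.exp (c • B) * NormedSpace.exp (d • B) := by
  rw [add_smul]
  exact Matrix.exp_add_of_commute _ _ (((Commute.refl B).smul_left c).smul_right d)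

lemma conjPsi {n K : ℕ} (H : Fin K → Mat n) (φ : Fin K → ℝ) (X : Mat n) :
    uH' H φ * chanΨ H φ X * uH H φ = chanΨdag H φ X := by
  unfold chanΨ chanΨdag
  have hc1 : Continuous fun t : ℝ => NormedSpace.exp ((-(Complex.I * (t : ℂ))) • Hm H φ) := by
    have : (fun t : ℝ => NormedSpace.exp ((-(Complex.I * (t : ℂ))) • Hm H φ))
        = fun t : ℝ => NormedSpace.exp (((-Complex.I) * (t : ℂ)) • Hm H φ) := by
      funext t; ring_nf
    rw [this]; exact matexp_cont' _ _
  rw [conj_intInt (uH' H φ) (uH H φ)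
    (fun t => NormedSpace.exp ((-(Complex.I * (t : ℂ))) • Hm H φ) * X *
      NormedSpace.exp ((Complex.I * (t : ℂ)) • Hm H φ))
    ((hc1.mul continuous_const).mul (matexp_cont' _ _))]
  have key : ∀ t : ℝ,
      uH' H φ *
        (NormedSpace.exp ((-(Complex.I * (t : ℂ))) • Hm H φ) * X *
          NormedSpace.exp ((Complex.I * (t : ℂ)) • Hm H φ)) * uH H φ
      = NormedSpace.exp ((Complex.I * ((1 - t : ℝ) : ℂ)) • Hm H φ) * X *
          NormedSpace.exp ((-(Complex.I * ((1 - t : ℝ) : ℂ))) • Hm H φ) := by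
    intro t
    have h1 : uH' H φ * NormedSpace.exp ((-(Complex.I * (t : ℂ))) • Hm H φ)
        = NormedSpace.exp ((Complex.I * ((1 - t : ℝ) : ℂ)) • Hm H φ) := by
      rw [show (Complex.I * ((1 - t : ℝ) : ℂ)) = Complex.I + (-(Complex.I * (t : ℂ)))
          by push_cast; ring, exp_smul_add']
      rfl
    have h2 : NormedSpace.exp ((Complex.I * (t : ℂ)) • Hm H φ) * uH H φ
        = NormedSpace.exp ((-(Complex.I * ((1 - t : ℝ) : ℂ))) • Hm H φ) := by
      rw [show (-(Complex.I * ((1 - t : ℝ) : ℂ))) = (Complex.I * (t : ℂ)) + (-Complex.I)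
          by push_cast; ring, exp_smul_add']
      congr 1
      rw [uH, neg_smul]
    calc uH' H φ * (NormedSpace.exp ((-(Complex.I * (t : ℂ))) • Hm H φ) * X *
          NormedSpace.exp ((Complex.I * (t : ℂ)) • Hm H φ)) * uH H φ
        = (uH' H φ * NormedSpace.exp ((-(Complex.I * (t : ℂ))) • Hm H φ)) * X *
          (NormedSpace.exp ((Complex.I * (t : ℂ)) • Hm H φ) * uH H φ) := by
          simp only [Matrix.mul_assoc]
      _ = _ := by rw [h1, h2]
  rw [intervalIntegral.integral_congr (fun t _ => key t)]
  have := intervalIntegral.integral_comp_sub_left (a := (0:ℝ)) (b := 1)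
    (fun s : ℝ => NormedSpace.exp ((Complex.I * (s : ℂ)) • Hm H φ) * X *
      NormedSpace.exp ((-(Complex.I * (s : ℂ))) • Hm H φ)) 1
  simpa using this

lemma herm_sum {n m : ℕ} (A : Fin m → Mat n) (c : Fin m → ℝ) (hA : ∀ j, (A j).IsHermitian) :
    (∑ j, (c j : ℂ) • A j)ᴴ = ∑ j, (c j : ℂ) • A j := by
  rw [conjTranspose_sum]
  exact Finset.sum_congr rfl fun j _ => by
    rw [conjTranspose_smul, Complex.star_def, Complex.conj_ofReal, (hA j).eq]

lemma uH_mul_uH' {n K : ℕ} (H : Fin K → Mat n) (φ : Fin K → ℝ) : uH H φ * uH' H φ = 1 := by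
  rw [uH, uH', show -(Complex.I • Hm H φ) = (-Complex.I) • Hm H φ from (neg_smul _ _).symm,
    ← exp_smul_add']
  simp [NormedSpace.exp_zero]

lemma uH'_mul_uH {n K : ℕ} (H : Fin K → Mat n) (φ : Fin K → ℝ) : uH' H φ * uH H φ = 1 := by
  rw [uH, uH', show -(Complex.I • Hm H φ) = (-Complex.I) • Hm H φ from (neg_smul _ _).symm,
    ← exp_smul_add']
  simp [NormedSpace.exp_zero]

lemma uH_conjT {n K : ℕ} (H : Fin K → Mat n) (φ : Fin K → ℝ) (hH : ∀ k, (H k).IsHermitian) :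
    (uH H φ)ᴴ = uH' H φ := by
  rw [uH, uH', ← Matrix.exp_conjTranspose]
  congr 1
  rw [conjTranspose_neg, conjTranspose_smul, show (Hm H φ)ᴴ = Hm H φ from herm_sum H φ hH,
    Complex.star_def, Complex.conj_I, neg_smul, neg_neg]

lemma keyR {n : ℕ} (hn : 1 ≤ n) (μ : Fin n → ℝ) (k l : Fin n) :
    cKM (lamd μ k) (lamd μ l) * (lamd μ k - lamd μ l)^2
      = (μ l - μ k) * (lamd μ k - lamd μ l) := by
  have hZ : 0 < ∑ m, Real.exp (-μ m) := by
    apply Finset.sum_pos (fun m _ => Real.exp_pos _)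
    rw [Finset.univ_nonempty_iff]
    exact Fin.pos_iff_nonempty.mp hn
  by_cases h : μ k = μ l
  · have : lamd μ k = lamd μ l := by rw [lamd, lamd, h]
    rw [this, h, sub_self]; ring
  · have hne : lamd μ k ≠ lamd μ l := by
      rw [lamd, lamd]
      intro hc
      have h2 : Real.exp (-μ k) = Real.exp (-μ l) :=
        (div_left_inj' (ne_of_gt hZ)).mp hc
      exact h (neg_injective (Real.exp_injective h2))
    have hlog : ∀ m : Fin n, Real.log (lamd μ m) = -μ m - Real.log (∑ p, Real.exp (-μ p)) := by
      intro m
      rw [lamd, Real.log_div (Real.exp_ne_zero _) (ne_of_gt hZ), Real.log_exp]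
    rw [cKM, if_neg hne, hlog, hlog]
    have hsub : lamd μ k - lamd μ l ≠ 0 := sub_ne_zero_of_ne hne
    field_simp
    ring

lemma endgame {n : ℕ} (lam mu : Fin n → ℝ) (c : Fin n → Fin n → ℝ)
    (hkey : ∀ k l, c k l * (lam k - lam l)^2 = (mu l - mu k) * (lam k - lam l))
    (ai aj : Fin n → Fin n → ℂ) :
    ∑ k, ∑ l, (c k l : ℂ) * (Complex.I * ((lam k : ℂ) * ai k l - ai k l * (lam l : ℂ)))
        * (Complex.I * ((lam l : ℂ) * aj l k - aj l k * (lam k : ℂ)))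
    = ∑ k, ∑ l, ((aj k l * (mu l : ℂ) - (mu k : ℂ) * aj k l) * ai l k
        - ai k l * (aj l k * (mu k : ℂ) - (mu l : ℂ) * aj l k)) * (lam k : ℂ) := by
  set F1 : Fin n → Fin n → ℂ :=
    fun k l => (lam k : ℂ) * ((mu l : ℂ) - (mu k : ℂ)) * aj k l * ai l k with hF1
  set F2 : Fin n → Fin n → ℂ :=
    fun k l => (lam k : ℂ) * ((mu l : ℂ) - (mu k : ℂ)) * ai k l * aj l k with hF2
  have hC : ∀ k l, (c k l : ℂ) * (Complex.I * ((lam k : ℂ) * ai k l - ai k l * (lam l : ℂ)))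
      * (Complex.I * ((lam l : ℂ) * aj l k - aj l k * (lam k : ℂ))) = F1 l k + F2 k l := by
    intro k l
    have hkC : (c k l : ℂ) * ((lam k : ℂ) - (lam l : ℂ))^2
        = ((mu l : ℂ) - (mu k : ℂ)) * ((lam k : ℂ) - (lam l : ℂ)) := by
      have := congrArg (Complex.ofReal) (hkey k l); push_cast at this; exact this
    rw [hF1, hF2]
    linear_combination ((c k l : ℂ) * (((lam k : ℂ) - lam l) * ai k l)
        * (((lam l : ℂ) - lam k) * aj l k)) * Complex.I_mul_I
      + (ai k l * aj l k) * hkC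
  have hR : ∀ k l, ((aj k l * (mu l : ℂ) - (mu k : ℂ) * aj k l) * ai l k
      - ai k l * (aj l k * (mu k : ℂ) - (mu l : ℂ) * aj l k)) * (lam k : ℂ)
      = F1 k l + F2 k l := by
    intro k l; rw [hF1, hF2]; ring
  calc ∑ k, ∑ l, (c k l : ℂ) * (Complex.I * ((lam k : ℂ) * ai k l - ai k l * (lam l : ℂ)))
        * (Complex.I * ((lam l : ℂ) * aj l k - aj l k * (lam k : ℂ)))
      = ∑ k, ∑ l, (F1 l k + F2 k l) :=
        Finset.sum_congr rfl fun k _ => Finset.sum_congr rfl fun l _ => hC k l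
    _ = (∑ k, ∑ l, F1 l k) + ∑ k, ∑ l, F2 k l := by simp [Finset.sum_add_distrib]
    _ = (∑ k, ∑ l, F1 k l) + ∑ k, ∑ l, F2 k l := by rw [Finset.sum_comm]
    _ = ∑ k, ∑ l, (F1 k l + F2 k l) := by simp [Finset.sum_add_distrib]
    _ = _ := Finset.sum_congr rfl fun k _ => Finset.sum_congr rfl fun l _ => (hR k l).symm

end Helpers

set_option maxHeartbeats 3000000 in
/-- Kubo–Mori information matrix elements of the evolved quantum Boltzmann machine with
respect to the `φ` parameters:
`I^KM_{ij}(φ) = ⟨[[Ψ_φ†(H_j),G(θ)],Ψ_φ†(H_i)]⟩_{ρ(θ)}`. -/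
theorem stmt17 {n J K : ℕ} (hn : 1 ≤ n) (hJ : 1 ≤ J) (hK : 1 ≤ K)
    (G : Fin J → Mat n) (H : Fin K → Mat n)
    (hG : ∀ j, (G j).IsHermitian) (hH : ∀ k, (H k).IsHermitian)
    (θ : Fin J → ℝ) (φ : Fin K → ℝ)
    (u : Fin n → Fin n → ℂ) (μ : Fin n → ℝ)
    (hortho : ∀ k l, dotc (u k) (u l) = if k = l then 1 else 0)
    (heig : ∀ k, (Gm G θ).mulVec (u k) = (μ k : ℂ) • u k)
    (i j : Fin K) :
    ∑ k, ∑ l, ((cKM (lamd μ k) (lamd μ l) : ℝ) : ℂ) *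
        dotc ((uH H φ).mulVec (u k)) ((Pφ G H θ φ i).mulVec ((uH H φ).mulVec (u l))) *
        dotc ((uH H φ).mulVec (u l)) ((Pφ G H θ φ j).mulVec ((uH H φ).mulVec (u k)))
      = Matrix.trace
          (((chanΨdag H φ (H j) * Gm G θ - Gm G θ * chanΨdag H φ (H j)) * chanΨdag H φ (H i)
            - chanΨdag H φ (H i) *
              (chanΨdag H φ (H j) * Gm G θ - Gm G θ * chanΨdag H φ (H j))) * qbm G θ) := by
  classical
  -- the eigenvector matrix
  set V : Mat n := Matrix.of (fun m k => u k m) with hVdef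
  have hV1 : Vᴴ * V = 1 := by
    ext k l
    have := hortho k l
    rw [dotc] at this
    simpa [Matrix.mul_apply, Matrix.conjTranspose_apply, hVdef, Matrix.one_apply,
      Complex.star_def] using this
  have hV2 : V * Vᴴ = 1 := mul_eq_one_comm.mp hV1
  set D : Mat n := Matrix.diagonal (fun k => (μ k : ℂ)) with hDdef
  have hGV : Gm G θ * V = V * D := by
    ext m k
    have h := congrFun (heig k) m
    simp only [Matrix.mulVec, dotProduct, Pi.smul_apply, smul_eq_mul] at h
    rw [hDdef, Matrix.mul_diagonal]
    simpa [Matrix.mul_apply, hVdef, mul_comm] using h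
  have hGdiag : Gm G θ = V * D * Vᴴ := by
    calc Gm G θ = Gm G θ * (V * Vᴴ) := by rw [hV2, Matrix.mul_one]
      _ = (Gm G θ * V) * Vᴴ := by rw [Matrix.mul_assoc]
      _ = V * D * Vᴴ := by rw [hGV]
  -- exponential of -G
  set Vu : (Mat n)ˣ := ⟨V, Vᴴ, hV2, hV1⟩ with hVu
  have hexpG : NormedSpace.exp (-(Gm G θ))
      = V * Matrix.diagonal (fun k => ((Real.exp (-μ k) : ℝ) : ℂ)) * Vᴴ := by
    have h1 : -(Gm G θ) = V * (-D) * Vᴴ := by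
      rw [hGdiag]; simp only [neg_mul, mul_neg]
    rw [h1]
    have h2 := Matrix.exp_units_conj Vu (-D)
    have h3 : ((Vu⁻¹ : (Mat n)ˣ) : Mat n) = Vᴴ := rfl
    rw [h3] at h2
    rw [show ((Vu : Mat n)) = V from rfl] at h2
    rw [h2]
    have hde : NormedSpace.exp (-D) = Matrix.diagonal (fun k => ((Real.exp (-μ k) : ℝ) : ℂ)) := by
      rw [hDdef, Matrix.diagonal_neg, Matrix.exp_diagonal, Pi.exp_def]
      have hfn : (fun i => NormedSpace.exp (-(μ i : ℂ)))
          = fun k => ((Real.exp (-μ k) : ℝ) : ℂ) := by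
        funext k
        rw [← Complex.exp_eq_exp_ℂ, Complex.ofReal_exp, Complex.ofReal_neg]
      rw [hfn]
    rw [hde]
  have hZsum : (Matrix.trace (NormedSpace.exp (-(Gm G θ))))
      = ((∑ m, Real.exp (-μ m) : ℝ) : ℂ) := by
    rw [hexpG, Matrix.trace_mul_cycle, hV1, Matrix.one_mul, Matrix.trace_diagonal]
    push_cast
    rfl
  have hZpos : (0:ℝ) < ∑ m, Real.exp (-μ m) := by
    apply Finset.sum_pos (fun m _ => Real.exp_pos _)
    rw [Finset.univ_nonempty_iff]
    exact Fin.pos_iff_nonempty.mp hn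
  have hZpf : Zpf G θ = ∑ m, Real.exp (-μ m) := by
    rw [Zpf, hZsum, Complex.ofReal_re]
  set Λ : Mat n := Matrix.diagonal (fun k => ((lamd μ k : ℝ) : ℂ)) with hΛdef
  have hrho : qbm G θ = V * Λ * Vᴴ := by
    have hfun : (fun k : Fin n => ((lamd μ k : ℝ) : ℂ))
        = ((∑ m, Real.exp (-μ m) : ℝ) : ℂ)⁻¹ • (fun k : Fin n => ((Real.exp (-μ k) : ℝ) : ℂ)) := by
      funext k
      simp only [Pi.smul_apply, smul_eq_mul, lamd]
      push_cast
      rw [div_eq_inv_mul]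
    have hsd : Λ = ((∑ m, Real.exp (-μ m) : ℝ) : ℂ)⁻¹ •
        Matrix.diagonal (fun k => ((Real.exp (-μ k) : ℝ) : ℂ)) := by
      rw [hΛdef, hfun, Matrix.diagonal_smul]
    rw [qbm, hexpG, hZpf, hsd, Matrix.mul_smul, Matrix.smul_mul]
  -- the evolved eigenvector matrix
  set W : Mat n := uH H φ * V with hWdef
  have hWct : Wᴴ = Vᴴ * uH' H φ := by
    rw [hWdef, Matrix.conjTranspose_mul, uH_conjT H φ hH]
  have hW1 : Wᴴ * W = 1 := by
    rw [hWct, hWdef]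
    calc Vᴴ * uH' H φ * (uH H φ * V) = Vᴴ * (uH' H φ * uH H φ) * V := by
          simp only [Matrix.mul_assoc]
      _ = 1 := by rw [uH'_mul_uH, Matrix.mul_one, hV1]
  have hW2 : W * Wᴴ = 1 := mul_eq_one_comm.mp hW1
  have hmulW : ∀ X Y : Mat n, (Wᴴ * X * W) * (Wᴴ * Y * W) = Wᴴ * (X * Y) * W := by
    intro X Y
    calc (Wᴴ * X * W) * (Wᴴ * Y * W) = Wᴴ * (X * ((W * Wᴴ) * (Y * W))) := by
          simp only [Matrix.mul_assoc]
      _ = Wᴴ * (X * Y) * W := by rw [hW2, Matrix.one_mul, Matrix.mul_assoc, Matrix.mul_assoc]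
  have homega : Wᴴ * eqbm G H θ φ * W = Λ := by
    rw [eqbm, hrho, hWct, hWdef]
    calc Vᴴ * uH' H φ * (uH H φ * (V * Λ * Vᴴ) * uH' H φ) * (uH H φ * V)
        = Vᴴ * (uH' H φ * uH H φ) * (V * Λ * Vᴴ) * (uH' H φ * uH H φ) * V := by
          simp only [Matrix.mul_assoc]
      _ = Vᴴ * (V * Λ * Vᴴ) * V := by rw [uH'_mul_uH]; simp only [Matrix.mul_one]
      _ = (Vᴴ * V) * Λ * (Vᴴ * V) := by simp only [Matrix.mul_assoc]
      _ = Λ := by rw [hV1, Matrix.one_mul, Matrix.mul_one]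
  set A : Fin K → Mat n := fun i' => Vᴴ * chanΨdag H φ (H i') * V with hAdef
  have hPsiW : ∀ i', Wᴴ * chanΨ H φ (H i') * W = A i' := by
    intro i'
    rw [hWct, hWdef, hAdef]
    calc Vᴴ * uH' H φ * chanΨ H φ (H i') * (uH H φ * V)
        = Vᴴ * (uH' H φ * chanΨ H φ (H i') * uH H φ) * V := by simp only [Matrix.mul_assoc]
      _ = Vᴴ * chanΨdag H φ (H i') * V := by rw [conjPsi]
  have hPW : ∀ i', Wᴴ * Pφ G H θ φ i' * W = Complex.I • (Λ * A i' - A i' * Λ) := by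
    intro i'
    rw [Pφ]
    rw [Matrix.mul_smul, Matrix.smul_mul]
    congr 1
    rw [Matrix.mul_sub, Matrix.sub_mul]
    congr 1
    · calc Wᴴ * (eqbm G H θ φ * chanΨ H φ (H i')) * W
          = (Wᴴ * eqbm G H θ φ * W) * (Wᴴ * chanΨ H φ (H i') * W) := (hmulW _ _).symm
        _ = Λ * A i' := by rw [homega, hPsiW]
    · calc Wᴴ * (chanΨ H φ (H i') * eqbm G H θ φ) * W
          = (Wᴴ * chanΨ H φ (H i') * W) * (Wᴴ * eqbm G H θ φ * W) := (hmulW _ _).symm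
        _ = A i' * Λ := by rw [homega, hPsiW]
  -- vectors as columns of W
  have hvec : ∀ k, (uH H φ).mulVec (u k) = fun m => W m k := by
    intro k; funext m
    simp [Matrix.mulVec, dotProduct, hWdef, Matrix.mul_apply, hVdef]
  have hdot : ∀ (X : Mat n) (k l : Fin n),
      dotc (fun m => W m k) (X.mulVec (fun m => W m l)) = (Wᴴ * X * W) k l := by
    intro X k l
    simp only [dotc, Matrix.mulVec, dotProduct, Matrix.mul_apply,
      Matrix.conjTranspose_apply, Finset.mul_sum, Finset.sum_mul, Complex.star_def]
    rw [Finset.sum_comm]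
    exact Finset.sum_congr rfl fun m _ => Finset.sum_congr rfl fun p _ => by ring
  have hterm : ∀ (i' : Fin K) (k l : Fin n),
      dotc ((uH H φ).mulVec (u k)) ((Pφ G H θ φ i').mulVec ((uH H φ).mulVec (u l)))
      = Complex.I * (((lamd μ k : ℝ) : ℂ) * (A i') k l - (A i') k l * ((lamd μ l : ℝ) : ℂ)) := by
    intro i' k l
    rw [hvec k, hvec l, hdot, hPW i']
    simp [hΛdef, Matrix.smul_apply, Matrix.sub_apply, Matrix.diagonal_mul, Matrix.mul_diagonal,
      smul_eq_mul]
  -- RHS reduction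
  have hVX : ∀ X Y : Mat n, (V * X * Vᴴ) * (V * Y * Vᴴ) = V * (X * Y) * Vᴴ := by
    intro X Y
    calc (V * X * Vᴴ) * (V * Y * Vᴴ) = V * (X * ((Vᴴ * V) * (Y * Vᴴ))) := by
          simp only [Matrix.mul_assoc]
      _ = V * (X * Y) * Vᴴ := by rw [hV1, Matrix.one_mul, Matrix.mul_assoc, Matrix.mul_assoc]
  have hPsidagV : ∀ i', chanΨdag H φ (H i') = V * A i' * Vᴴ := by
    intro i'
    rw [hAdef]
    calc chanΨdag H φ (H i')
        = (V * Vᴴ) * chanΨdag H φ (H i') * (V * Vᴴ) := by rw [hV2]; simp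
      _ = V * (Vᴴ * chanΨdag H φ (H i') * V) * Vᴴ := by simp only [Matrix.mul_assoc]
  have hsubV : ∀ X Y : Mat n, (V * X * Vᴴ) - (V * Y * Vᴴ) = V * (X - Y) * Vᴴ := by
    intro X Y
    rw [Matrix.mul_sub, Matrix.sub_mul]
  set Mb : Mat n := (A j * D - D * A j) * A i - A i * (A j * D - D * A j) with hMb
  have hRHS : ((chanΨdag H φ (H j) * Gm G θ - Gm G θ * chanΨdag H φ (H j)) * chanΨdag H φ (H i)
      - chanΨdag H φ (H i) *
        (chanΨdag H φ (H j) * Gm G θ - Gm G θ * chanΨdag H φ (H j))) * qbm G θ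
      = V * (Mb * Λ) * Vᴴ := by
    rw [hPsidagV i, hPsidagV j, hGdiag, hrho, hMb]
    rw [hVX, hVX, hsubV, hVX, hVX, hsubV, hVX]
  rw [hRHS]
  have htrV : Matrix.trace (V * (Mb * Λ) * Vᴴ) = Matrix.trace (Mb * Λ) := by
    rw [Matrix.trace_mul_cycle, ← Matrix.mul_assoc, hV1, Matrix.one_mul]
  rw [htrV]
  -- reduce LHS to scalar sums
  have hLHS : ∀ (k l : Fin n),
      ((cKM (lamd μ k) (lamd μ l) : ℝ) : ℂ) *
        dotc ((uH H φ).mulVec (u k)) ((Pφ G H θ φ i).mulVec ((uH H φ).mulVec (u l))) *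
        dotc ((uH H φ).mulVec (u l)) ((Pφ G H θ φ j).mulVec ((uH H φ).mulVec (u k)))
      = ((cKM (lamd μ k) (lamd μ l) : ℝ) : ℂ) *
        (Complex.I * (((lamd μ k : ℝ) : ℂ) * (A i) k l - (A i) k l * ((lamd μ l : ℝ) : ℂ))) *
        (Complex.I * (((lamd μ l : ℝ) : ℂ) * (A j) l k - (A j) l k * ((lamd μ k : ℝ) : ℂ))) := by
    intro k l
    rw [hterm i k l, hterm j l k]
  rw [Finset.sum_congr rfl fun k _ => Finset.sum_congr rfl fun l _ => hLHS k l]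
  -- expand the trace
  have htr : Matrix.trace (Mb * Λ)
      = ∑ k, ∑ l, (((A j) k l * ((μ l : ℝ) : ℂ) - ((μ k : ℝ) : ℂ) * (A j) k l) * (A i) l k
          - (A i) k l * ((A j) l k * ((μ k : ℝ) : ℂ) - ((μ l : ℝ) : ℂ) * (A j) l k))
          * ((lamd μ k : ℝ) : ℂ) := by
    rw [Matrix.trace]
    refine Finset.sum_congr rfl fun k _ => ?_
    rw [Matrix.diag_apply, hΛdef, Matrix.mul_diagonal, hMb]
    rw [Matrix.sub_apply, Matrix.mul_apply, Matrix.mul_apply, ← Finset.sum_sub_distrib,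
      Finset.sum_mul]
    refine Finset.sum_congr rfl fun l _ => ?_
    rw [Matrix.sub_apply, Matrix.sub_apply, hDdef, Matrix.mul_diagonal, Matrix.diagonal_mul,
      Matrix.mul_diagonal, Matrix.diagonal_mul]
  rw [htr]
  exact endgame (lamd μ) μ (fun k l => cKM (lamd μ k) (lamd μ l)) (fun k l => keyR hn μ k l)
    (fun k l => (A i) k l) (fun k l => (A j) k l)

end
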